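/- For every t ∈ ℝ, the determinant of the 4×4 matrix with columns Γ t, deriv Γ t, iteratedDeriv 2 Γ t, iteratedDeriv 3 Γ t equals the negative of the expression κ1²κ3(κ2² + κ3²) + κ2(κ2² + κ3²)κ1' − 3κ1κ3²κ2' + 3κ1κ2κ3κ3' + 2κ3(κ2')² − 2κ2κ2'κ3' − κ2κ3κ2'' + κ2²κ3'' (all κ's, κ' = deriv κ, κ'' = iteratedDeriv 2 κ evaluated at t). In particular this determinant vanishes at t if and only if the displayed expression vanishes at t (condition (II) for a swallowtail-tangent point). -/

import Mathlib

open scoped RealInnerProductSpace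

noncomputable def cross3 (u v : EuclideanSpace ℝ (Fin 3)) : EuclideanSpace ℝ (Fin 3) :=
  (WithLp.equiv 2 (Fin 3 → ℝ)).symm
    ![u 1 * v 2 - u 2 * v 1, u 2 * v 0 - u 0 * v 2, u 0 * v 1 - u 1 * v 0]

noncomputable def det3 (u v w : EuclideanSpace ℝ (Fin 3)) : ℝ :=
  Matrix.det (Matrix.of (fun i j => ![u, v, w] j i))

noncomputable def det4 (u v w x : Fin 4 → ℝ) : ℝ :=
  Matrix.det (Matrix.of (fun i j => ![u, v, w, x] j i))

noncomputable section StmtAux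

abbrev E3' := EuclideanSpace ℝ (Fin 3)

def sN1 (κ2 κ3 : ℝ → ℝ) (e1 e2 : ℝ → E3') : ℝ → E3' :=
  fun t => (-(κ2 t)) • e1 t - κ3 t • e2 t

def sN2 (κ1 κ2 κ3 : ℝ → ℝ) (e1 e2 e3 : ℝ → E3') : ℝ → E3' :=
  fun t => (κ1 t * κ3 t - deriv κ2 t) • e1 t
    + (-(κ1 t * κ2 t) - deriv κ3 t) • e2 t
    + (-(κ2 t ^ 2 + κ3 t ^ 2)) • e3 t

def sN3 (κ1 κ2 κ3 : ℝ → ℝ) (e1 e2 e3 : ℝ → E3') : ℝ → E3' :=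
  fun t => ((deriv κ1 t * κ3 t + κ1 t * deriv κ3 t - iteratedDeriv 2 κ2 t)
      - (-(κ1 t * κ2 t) - deriv κ3 t) * κ1 t - (-(κ2 t ^ 2 + κ3 t ^ 2)) * κ2 t) • e1 t
    + ((-(deriv κ1 t * κ2 t + κ1 t * deriv κ2 t) - iteratedDeriv 2 κ3 t)
      + (κ1 t * κ3 t - deriv κ2 t) * κ1 t - (-(κ2 t ^ 2 + κ3 t ^ 2)) * κ3 t) • e2 t
    + ((-(2 * κ2 t * deriv κ2 t + 2 * κ3 t * deriv κ3 t))
      + (κ1 t * κ3 t - deriv κ2 t) * κ2 t + (-(κ1 t * κ2 t) - deriv κ3 t) * κ3 t) • e3 t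

def sD1 (κ1 κ2 : ℝ → ℝ) (e2 e3 : ℝ → E3') : ℝ → E3' :=
  fun t => κ1 t • e2 t + κ2 t • e3 t

def sD2 (κ1 κ2 κ3 : ℝ → ℝ) (e1 e2 e3 : ℝ → E3') : ℝ → E3' :=
  fun t => (κ1 t • ((-(κ1 t)) • e1 t + κ3 t • e3 t) + deriv κ1 t • e2 t)
    + (κ2 t • ((-(κ2 t)) • e1 t - κ3 t • e2 t) + deriv κ2 t • e3 t)

def sS0 (γ e3 : ℝ → E3') : ℝ → ℝ := fun t => -⟪γ t, e3 t⟫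

def sS1 (κ2 κ3 : ℝ → ℝ) (γ e1 e2 e3 : ℝ → E3') : ℝ → ℝ :=
  fun t => -(⟪γ t, sN1 κ2 κ3 e1 e2 t⟫ + ⟪e1 t, e3 t⟫)

def sS2 (κ1 κ2 κ3 : ℝ → ℝ) (γ e1 e2 e3 : ℝ → E3') : ℝ → ℝ :=
  fun t => -((⟪γ t, sN2 κ1 κ2 κ3 e1 e2 e3 t⟫ + ⟪e1 t, sN1 κ2 κ3 e1 e2 t⟫)
    + (⟪e1 t, sN1 κ2 κ3 e1 e2 t⟫ + ⟪sD1 κ1 κ2 e2 e3 t, e3 t⟫))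

def sS3 (κ1 κ2 κ3 : ℝ → ℝ) (γ e1 e2 e3 : ℝ → E3') : ℝ → ℝ :=
  fun t => -(((⟪γ t, sN3 κ1 κ2 κ3 e1 e2 e3 t⟫ + ⟪e1 t, sN2 κ1 κ2 κ3 e1 e2 e3 t⟫)
      + (⟪e1 t, sN2 κ1 κ2 κ3 e1 e2 e3 t⟫ + ⟪sD1 κ1 κ2 e2 e3 t, sN1 κ2 κ3 e1 e2 t⟫))
    + ((⟪e1 t, sN2 κ1 κ2 κ3 e1 e2 e3 t⟫ + ⟪sD1 κ1 κ2 e2 e3 t, sN1 κ2 κ3 e1 e2 t⟫)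
      + (⟪sD1 κ1 κ2 e2 e3 t, sN1 κ2 κ3 e1 e2 t⟫ + ⟪sD2 κ1 κ2 κ3 e1 e2 e3 t, e3 t⟫)))

def sΓ1 (κ1 κ2 κ3 : ℝ → ℝ) (γ e1 e2 e3 : ℝ → E3') : ℝ → (Fin 4 → ℝ) :=
  fun t => ![sN1 κ2 κ3 e1 e2 t 0, sN1 κ2 κ3 e1 e2 t 1, sN1 κ2 κ3 e1 e2 t 2,
    sS1 κ2 κ3 γ e1 e2 e3 t]

def sΓ2 (κ1 κ2 κ3 : ℝ → ℝ) (γ e1 e2 e3 : ℝ → E3') : ℝ → (Fin 4 → ℝ) :=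
  fun t => ![sN2 κ1 κ2 κ3 e1 e2 e3 t 0, sN2 κ1 κ2 κ3 e1 e2 e3 t 1,
    sN2 κ1 κ2 κ3 e1 e2 e3 t 2, sS2 κ1 κ2 κ3 γ e1 e2 e3 t]

def sΓ3 (κ1 κ2 κ3 : ℝ → ℝ) (γ e1 e2 e3 : ℝ → E3') : ℝ → (Fin 4 → ℝ) :=
  fun t => ![sN3 κ1 κ2 κ3 e1 e2 e3 t 0, sN3 κ1 κ2 κ3 e1 e2 e3 t 1,
    sN3 κ1 κ2 κ3 e1 e2 e3 t 2, sS3 κ1 κ2 κ3 γ e1 e2 e3 t]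

lemma iteratedDeriv_two (f : ℝ → ℝ) : iteratedDeriv 2 f = deriv (deriv f) := by
  rw [iteratedDeriv_succ, iteratedDeriv_one]


theorem det_fin_four' {R : Type*} [CommRing R] (A : Matrix (Fin 4) (Fin 4) R) :
    Matrix.det A =
      A 0 0 * (A 1 1 * (A 2 2 * A 3 3 - A 2 3 * A 3 2) - A 1 2 * (A 2 1 * A 3 3 - A 2 3 * A 3 1)
        + A 1 3 * (A 2 1 * A 3 2 - A 2 2 * A 3 1))
      - A 0 1 * (A 1 0 * (A 2 2 * A 3 3 - A 2 3 * A 3 2) - A 1 2 * (A 2 0 * A 3 3 - A 2 3 * A 3 0)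
        + A 1 3 * (A 2 0 * A 3 2 - A 2 2 * A 3 0))
      + A 0 2 * (A 1 0 * (A 2 1 * A 3 3 - A 2 3 * A 3 1) - A 1 1 * (A 2 0 * A 3 3 - A 2 3 * A 3 0)
        + A 1 3 * (A 2 0 * A 3 1 - A 2 1 * A 3 0))
      - A 0 3 * (A 1 0 * (A 2 1 * A 3 2 - A 2 2 * A 3 1) - A 1 1 * (A 2 0 * A 3 2 - A 2 2 * A 3 0)
        + A 1 2 * (A 2 0 * A 3 1 - A 2 1 * A 3 0)) := by
  rw [Matrix.det_succ_row_zero, Fin.sum_univ_four]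
  simp only [Matrix.det_fin_three, Matrix.submatrix_apply, Fin.succ_zero_eq_one,
    Fin.succ_one_eq_two, Fin.zero_succAbove, Fin.succ_succAbove_zero, Fin.succ_succAbove_one,
    Fin.val_zero, Fin.val_succ, Fin.val_one]
  norm_num [Fin.succ, Fin.succAbove, Fin.lt_def, Fin.ext_iff]
  simp only [show ((3 : Fin 4) : ℕ) = 3 from rfl, show (⟨3,by norm_num⟩ : Fin 4) = 3 from rfl, show (⟨2,by norm_num⟩ : Fin 4) = 2 from rfl, Fin.isValue]
  norm_num [show (Fin.castSucc (2:Fin 3) : Fin 4) = 2 from rfl]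
  ring

end StmtAux

set_option maxHeartbeats 2000000 in
theorem stmt15
    (γ e1 e2 e3 : ℝ → EuclideanSpace ℝ (Fin 3)) (κ1 κ2 κ3 : ℝ → ℝ)
    (hγ : ContDiff ℝ (⊤ : ℕ∞) γ)
    (he1s : ContDiff ℝ (⊤ : ℕ∞) e1) (he2s : ContDiff ℝ (⊤ : ℕ∞) e2)
    (he3s : ContDiff ℝ (⊤ : ℕ∞) e3)
    (hκ1s : ContDiff ℝ (⊤ : ℕ∞) κ1) (hκ2s : ContDiff ℝ (⊤ : ℕ∞) κ2)
    (hκ3s : ContDiff ℝ (⊤ : ℕ∞) κ3)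
    (he1 : e1 = deriv γ)
    (hON : ∀ t, Orthonormal ℝ ![e1 t, e2 t, e3 t])
    (hor : ∀ t, e3 t = cross3 (e1 t) (e2 t))
    (hE1 : ∀ t, deriv e1 t = κ1 t • e2 t + κ2 t • e3 t)
    (hE2 : ∀ t, deriv e2 t = (-(κ1 t)) • e1 t + κ3 t • e3 t)
    (hE3 : ∀ t, deriv e3 t = (-(κ2 t)) • e1 t - κ3 t • e2 t)
    (Γ : ℝ → (Fin 4 → ℝ))
    (hΓ : ∀ t, Γ t = ![e3 t 0, e3 t 1, e3 t 2, -⟪γ t, e3 t⟫]) :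
    ∀ t : ℝ,
      det4 (Γ t) (deriv Γ t) (iteratedDeriv 2 Γ t) (iteratedDeriv 3 Γ t)
        = -((κ1 t)^2 * κ3 t * ((κ2 t)^2 + (κ3 t)^2)
            + κ2 t * ((κ2 t)^2 + (κ3 t)^2) * deriv κ1 t
            - 3 * κ1 t * (κ3 t)^2 * deriv κ2 t
            + 3 * κ1 t * κ2 t * κ3 t * deriv κ3 t
            + 2 * κ3 t * (deriv κ2 t)^2
            - 2 * κ2 t * deriv κ2 t * deriv κ3 t
            - κ2 t * κ3 t * iteratedDeriv 2 κ2 t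
            + (κ2 t)^2 * iteratedDeriv 2 κ3 t)
      ∧ (det4 (Γ t) (deriv Γ t) (iteratedDeriv 2 Γ t) (iteratedDeriv 3 Γ t) = 0
          ↔ (κ1 t)^2 * κ3 t * ((κ2 t)^2 + (κ3 t)^2)
            + κ2 t * ((κ2 t)^2 + (κ3 t)^2) * deriv κ1 t
            - 3 * κ1 t * (κ3 t)^2 * deriv κ2 t
            + 3 * κ1 t * κ2 t * κ3 t * deriv κ3 t
            + 2 * κ3 t * (deriv κ2 t)^2
            - 2 * κ2 t * deriv κ2 t * deriv κ3 t
            - κ2 t * κ3 t * iteratedDeriv 2 κ2 t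
            + (κ2 t)^2 * iteratedDeriv 2 κ3 t = 0) := by
  -- scalar derivative facts
  have hk1 : ∀ t, HasDerivAt κ1 (deriv κ1 t) t := fun t =>
    ((hκ1s.differentiable (by simp)) t).hasDerivAt
  have hk2 : ∀ t, HasDerivAt κ2 (deriv κ2 t) t := fun t =>
    ((hκ2s.differentiable (by simp)) t).hasDerivAt
  have hk3 : ∀ t, HasDerivAt κ3 (deriv κ3 t) t := fun t =>
    ((hκ3s.differentiable (by simp)) t).hasDerivAt
  have hκ2d : ContDiff ℝ (⊤ : ℕ∞) (deriv κ2) := (contDiff_infty_iff_deriv.mp hκ2s).2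
  have hκ3d : ContDiff ℝ (⊤ : ℕ∞) (deriv κ3) := (contDiff_infty_iff_deriv.mp hκ3s).2
  have hk2' : ∀ t, HasDerivAt (deriv κ2) (iteratedDeriv 2 κ2 t) t := fun t => by
    rw [iteratedDeriv_two]
    exact ((hκ2d.differentiable (by simp)) t).hasDerivAt
  have hk3' : ∀ t, HasDerivAt (deriv κ3) (iteratedDeriv 2 κ3 t) t := fun t => by
    rw [iteratedDeriv_two]
    exact ((hκ3d.differentiable (by simp)) t).hasDerivAt
  -- vector derivative facts
  have hdγ : ∀ t, HasDerivAt γ (e1 t) t := fun t => by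
    have := ((hγ.differentiable (by simp)) t).hasDerivAt
    rwa [← he1] at this
  have hde1 : ∀ t, HasDerivAt e1 (κ1 t • e2 t + κ2 t • e3 t) t := fun t => by
    have := ((he1s.differentiable (by simp)) t).hasDerivAt
    rwa [hE1 t] at this
  have hde2 : ∀ t, HasDerivAt e2 ((-(κ1 t)) • e1 t + κ3 t • e3 t) t := fun t => by
    have := ((he2s.differentiable (by simp)) t).hasDerivAt
    rwa [hE2 t] at this
  have hde3 : ∀ t, HasDerivAt e3 ((-(κ2 t)) • e1 t - κ3 t • e2 t) t := fun t => by
    have := ((he3s.differentiable (by simp)) t).hasDerivAt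
    rwa [hE3 t] at this
  have hde3' : ∀ t, HasDerivAt e3 (sN1 κ2 κ3 e1 e2 t) t := hde3
  have hdN1 : ∀ t, HasDerivAt (sN1 κ2 κ3 e1 e2) (sN2 κ1 κ2 κ3 e1 e2 e3 t) t := fun t => by
    have := ((hk2 t).neg.smul (hde1 t)).sub ((hk3 t).smul (hde2 t))
    refine this.congr_deriv ?_
    simp only [sN2, Pi.neg_apply, Pi.sub_apply, Pi.mul_apply, Pi.add_apply, Pi.pow_apply]
    module
  have hdN2 : ∀ t, HasDerivAt (sN2 κ1 κ2 κ3 e1 e2 e3) (sN3 κ1 κ2 κ3 e1 e2 e3 t) t := fun t => by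
    have h1 := (((hk1 t).mul (hk3 t)).sub (hk2' t)).smul (hde1 t)
    have h2 := ((((hk1 t).mul (hk2 t)).neg).sub (hk3' t)).smul (hde2 t)
    have h3 := ((((hk2 t).pow 2).add ((hk3 t).pow 2)).neg).smul (hde3 t)
    have := (h1.add h2).add h3
    refine this.congr_deriv ?_
    simp only [sN3, Pi.neg_apply, Pi.sub_apply, Pi.mul_apply, Pi.add_apply, Pi.pow_apply]
    module
  have hdD1 : ∀ t, HasDerivAt (sD1 κ1 κ2 e2 e3) (sD2 κ1 κ2 κ3 e1 e2 e3 t) t := fun t => by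
    exact ((hk1 t).smul (hde2 t)).add ((hk2 t).smul (hde3 t))
  -- scalar component derivative facts
  have hdS0 : ∀ t, HasDerivAt (sS0 γ e3) (sS1 κ2 κ3 γ e1 e2 e3 t) t := fun t => by
    exact (HasDerivAt.inner ℝ (hdγ t) (hde3' t)).neg
  have hdS1 : ∀ t, HasDerivAt (sS1 κ2 κ3 γ e1 e2 e3) (sS2 κ1 κ2 κ3 γ e1 e2 e3 t) t := fun t => by
    exact ((HasDerivAt.inner ℝ (hdγ t) (hdN1 t)).add
      (HasDerivAt.inner ℝ (hde1 t) (hde3' t))).neg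
  have hdS2 : ∀ t, HasDerivAt (sS2 κ1 κ2 κ3 γ e1 e2 e3) (sS3 κ1 κ2 κ3 γ e1 e2 e3 t) t := fun t => by
    exact (((HasDerivAt.inner ℝ (hdγ t) (hdN2 t)).add
        (HasDerivAt.inner ℝ (hde1 t) (hdN1 t))).add
      ((HasDerivAt.inner ℝ (hde1 t) (hdN1 t)).add
        (HasDerivAt.inner ℝ (hdD1 t) (hde3' t)))).neg
  -- Γ and its derivatives
  have hΓfun : Γ = fun t => ![e3 t 0, e3 t 1, e3 t 2, sS0 γ e3 t] := by
    funext t; rw [hΓ t]; rfl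
  have hproj : ∀ (i : Fin 3) (f : ℝ → E3') (v : E3') (t : ℝ), HasDerivAt f v t →
      HasDerivAt (fun s => f s i) (v i) t := by
    intro i f v t hf
    exact (PiLp.proj 2 (fun _ : Fin 3 => ℝ) i).hasFDerivAt.comp_hasDerivAt t hf
  have hdΓ : ∀ t, HasDerivAt Γ (sΓ1 κ1 κ2 κ3 γ e1 e2 e3 t) t := fun t => by
    rw [hΓfun]
    refine hasDerivAt_pi.2 fun i => ?_
    fin_cases i
    · simpa [sΓ1] using hproj 0 e3 _ t (hde3' t)
    · simpa [sΓ1] using hproj 1 e3 _ t (hde3' t)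
    · simpa [sΓ1] using hproj 2 e3 _ t (hde3' t)
    · simpa [sΓ1] using hdS0 t
  have hdΓ1 : ∀ t, HasDerivAt (sΓ1 κ1 κ2 κ3 γ e1 e2 e3) (sΓ2 κ1 κ2 κ3 γ e1 e2 e3 t) t := fun t => by
    refine hasDerivAt_pi.2 fun i => ?_
    fin_cases i
    · simpa [sΓ1, sΓ2] using hproj 0 _ _ t (hdN1 t)
    · simpa [sΓ1, sΓ2] using hproj 1 _ _ t (hdN1 t)
    · simpa [sΓ1, sΓ2] using hproj 2 _ _ t (hdN1 t)
    · simpa [sΓ1, sΓ2] using hdS1 t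
  have hdΓ2 : ∀ t, HasDerivAt (sΓ2 κ1 κ2 κ3 γ e1 e2 e3) (sΓ3 κ1 κ2 κ3 γ e1 e2 e3 t) t := fun t => by
    refine hasDerivAt_pi.2 fun i => ?_
    fin_cases i
    · simpa [sΓ2, sΓ3] using hproj 0 _ _ t (hdN2 t)
    · simpa [sΓ2, sΓ3] using hproj 1 _ _ t (hdN2 t)
    · simpa [sΓ2, sΓ3] using hproj 2 _ _ t (hdN2 t)
    · simpa [sΓ2, sΓ3] using hdS2 t
  have hd1 : deriv Γ = sΓ1 κ1 κ2 κ3 γ e1 e2 e3 := funext fun s => (hdΓ s).deriv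
  have hd2 : iteratedDeriv 2 Γ = sΓ2 κ1 κ2 κ3 γ e1 e2 e3 := by
    rw [iteratedDeriv_succ, iteratedDeriv_one, hd1]
    exact funext fun s => (hdΓ1 s).deriv
  have hd3 : iteratedDeriv 3 Γ = sΓ3 κ1 κ2 κ3 γ e1 e2 e3 := by
    rw [iteratedDeriv_succ, hd2]
    exact funext fun s => (hdΓ2 s).deriv
  intro t
  -- orthonormality facts
  have hON' := orthonormal_iff_ite.mp (hON t)
  have h11 : ⟪e1 t, e1 t⟫ = 1 := by simpa using hON' 0 0
  have h12 : ⟪e1 t, e2 t⟫ = 0 := by simpa using hON' 0 1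
  have h13 : ⟪e1 t, e3 t⟫ = 0 := by simpa using hON' 0 2
  have h21 : ⟪e2 t, e1 t⟫ = 0 := by simpa using hON' 1 0
  have h22 : ⟪e2 t, e2 t⟫ = 1 := by simpa using hON' 1 1
  have h23 : ⟪e2 t, e3 t⟫ = 0 := by simpa using hON' 1 2
  have h31 : ⟪e3 t, e1 t⟫ = 0 := by simpa using hON' 2 0
  have h32 : ⟪e3 t, e2 t⟫ = 0 := by simpa using hON' 2 1
  have h33 : ⟪e3 t, e3 t⟫ = 1 := by simpa using hON' 2 2
  -- component facts for e3 via cross product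
  have hz0 : e3 t 0 = e1 t 1 * e2 t 2 - e1 t 2 * e2 t 1 := by
    rw [hor t]; simp [cross3]
  have hz1 : e3 t 1 = e1 t 2 * e2 t 0 - e1 t 0 * e2 t 2 := by
    rw [hor t]; simp [cross3]
  have hz2 : e3 t 2 = e1 t 0 * e2 t 1 - e1 t 1 * e2 t 0 := by
    rw [hor t]; simp [cross3]
  -- expanded inner products
  have hxx : e1 t 0 * e1 t 0 + e1 t 1 * e1 t 1 + e1 t 2 * e1 t 2 = 1 := by
    have h := h11
    simp only [PiLp.inner_apply, RCLike.inner_apply, conj_trivial, Fin.sum_univ_three] at h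
    linear_combination h
  have hyy : e2 t 0 * e2 t 0 + e2 t 1 * e2 t 1 + e2 t 2 * e2 t 2 = 1 := by
    have h := h22
    simp only [PiLp.inner_apply, RCLike.inner_apply, conj_trivial, Fin.sum_univ_three] at h
    linear_combination h
  have hxy : e1 t 0 * e2 t 0 + e1 t 1 * e2 t 1 + e1 t 2 * e2 t 2 = 0 := by
    have h := h12
    simp only [PiLp.inner_apply, RCLike.inner_apply, conj_trivial, Fin.sum_univ_three] at h
    linear_combination h
  -- the matrix factorization
  set G1 : ℝ := ⟪γ t, e1 t⟫ with hG1
  set G2 : ℝ := ⟪γ t, e2 t⟫ with hG2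
  set G3 : ℝ := ⟪γ t, e3 t⟫ with hG3
  have hs0 : sS0 γ e3 t = -G3 := rfl
  have hs1 : sS1 κ2 κ3 γ e1 e2 e3 t = -((-(κ2 t)) * G1 - κ3 t * G2) := by
    simp only [sS1, sN1, inner_sub_right, real_inner_smul_right, h13, ← hG1, ← hG2]
    ring
  have hs2 : sS2 κ1 κ2 κ3 γ e1 e2 e3 t =
      κ2 t - ((κ1 t * κ3 t - deriv κ2 t) * G1 + (-(κ1 t * κ2 t) - deriv κ3 t) * G2
        + (-(κ2 t ^ 2 + κ3 t ^ 2)) * G3) := by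
    simp only [sS2, sN2, sN1, sD1, inner_add_right, inner_sub_right, inner_add_left,
      real_inner_smul_right, real_inner_smul_left, h11, h12, h13, h21, h22, h23, h31, h32, h33,
      ← hG1, ← hG2, ← hG3]
    ring
  have hs3 : sS3 κ1 κ2 κ3 γ e1 e2 e3 t =
      (-(κ1 t * κ3 t) + 2 * deriv κ2 t)
      - (((deriv κ1 t * κ3 t + κ1 t * deriv κ3 t - iteratedDeriv 2 κ2 t)
          - (-(κ1 t * κ2 t) - deriv κ3 t) * κ1 t - (-(κ2 t ^ 2 + κ3 t ^ 2)) * κ2 t) * G1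
        + ((-(deriv κ1 t * κ2 t + κ1 t * deriv κ2 t) - iteratedDeriv 2 κ3 t)
          + (κ1 t * κ3 t - deriv κ2 t) * κ1 t - (-(κ2 t ^ 2 + κ3 t ^ 2)) * κ3 t) * G2
        + ((-(2 * κ2 t * deriv κ2 t + 2 * κ3 t * deriv κ3 t))
          + (κ1 t * κ3 t - deriv κ2 t) * κ2 t + (-(κ1 t * κ2 t) - deriv κ3 t) * κ3 t) * G3) := by
    simp only [sS3, sN3, sN2, sN1, sD1, sD2, inner_add_right, inner_sub_right, inner_add_left,
      inner_sub_left, real_inner_smul_right, real_inner_smul_left,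
      h11, h12, h13, h21, h22, h23, h31, h32, h33, ← hG1, ← hG2, ← hG3]
    ring
  have key : (Matrix.of (fun i j => ![Γ t, sΓ1 κ1 κ2 κ3 γ e1 e2 e3 t,
        sΓ2 κ1 κ2 κ3 γ e1 e2 e3 t, sΓ3 κ1 κ2 κ3 γ e1 e2 e3 t] j i)) =
      (Matrix.of ![![e1 t 0, e2 t 0, e3 t 0, 0], ![e1 t 1, e2 t 1, e3 t 1, 0],
          ![e1 t 2, e2 t 2, e3 t 2, 0], ![0, 0, 0, 1]]) *
      (Matrix.of ![![0, -(κ2 t), κ1 t * κ3 t - deriv κ2 t,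
            (deriv κ1 t * κ3 t + κ1 t * deriv κ3 t - iteratedDeriv 2 κ2 t)
              - (-(κ1 t * κ2 t) - deriv κ3 t) * κ1 t - (-(κ2 t ^ 2 + κ3 t ^ 2)) * κ2 t],
          ![0, -(κ3 t), -(κ1 t * κ2 t) - deriv κ3 t,
            (-(deriv κ1 t * κ2 t + κ1 t * deriv κ2 t) - iteratedDeriv 2 κ3 t)
              + (κ1 t * κ3 t - deriv κ2 t) * κ1 t - (-(κ2 t ^ 2 + κ3 t ^ 2)) * κ3 t],
          ![1, 0, -(κ2 t ^ 2 + κ3 t ^ 2),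
            (-(2 * κ2 t * deriv κ2 t + 2 * κ3 t * deriv κ3 t))
              + (κ1 t * κ3 t - deriv κ2 t) * κ2 t + (-(κ1 t * κ2 t) - deriv κ3 t) * κ3 t],
          ![sS0 γ e3 t, sS1 κ2 κ3 γ e1 e2 e3 t, sS2 κ1 κ2 κ3 γ e1 e2 e3 t,
            sS3 κ1 κ2 κ3 γ e1 e2 e3 t]]) := by
    ext i j
    fin_cases i <;> fin_cases j <;>
      simp only [Matrix.mul_apply, Fin.sum_univ_four, Matrix.of_apply, Matrix.cons_val',
        Matrix.cons_val_zero, Matrix.cons_val_one, Matrix.head_cons, Matrix.cons_val_two,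
        Matrix.tail_cons, Matrix.cons_val_three, Matrix.head_fin_const, Matrix.empty_val',
        Matrix.cons_val_fin_one, Fin.zero_eta, Fin.mk_one, Fin.reduceFinMk, Fin.isValue, hΓfun, sΓ1, sΓ2, sΓ3, sN1, sN2, sN3, PiLp.add_apply,
        PiLp.sub_apply, PiLp.smul_apply, PiLp.neg_apply, smul_eq_mul] <;>
      ring
  have main : det4 (Γ t) (deriv Γ t) (iteratedDeriv 2 Γ t) (iteratedDeriv 3 Γ t)
      = -((κ1 t)^2 * κ3 t * ((κ2 t)^2 + (κ3 t)^2)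
          + κ2 t * ((κ2 t)^2 + (κ3 t)^2) * deriv κ1 t
          - 3 * κ1 t * (κ3 t)^2 * deriv κ2 t
          + 3 * κ1 t * κ2 t * κ3 t * deriv κ3 t
          + 2 * κ3 t * (deriv κ2 t)^2
          - 2 * κ2 t * deriv κ2 t * deriv κ3 t
          - κ2 t * κ3 t * iteratedDeriv 2 κ2 t
          + (κ2 t)^2 * iteratedDeriv 2 κ3 t) := by
    rw [hd1, hd2, hd3, det4, key, Matrix.det_mul]
    have hB : (Matrix.of ![![e1 t 0, e2 t 0, e3 t 0, 0], ![e1 t 1, e2 t 1, e3 t 1, 0],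
        ![e1 t 2, e2 t 2, e3 t 2, 0], ![(0:ℝ), 0, 0, 1]]).det = 1 := by
      rw [det_fin_four']
      simp only [Matrix.of_apply, Matrix.cons_val', Matrix.cons_val_zero, Matrix.cons_val_one,
        Matrix.head_cons, Matrix.empty_val', Matrix.cons_val_fin_one, Matrix.head_fin_const,
        Matrix.cons_val_two, Matrix.tail_cons, Matrix.cons_val_three]
      rw [hz0, hz1, hz2]
      linear_combination (e2 t 0 * e2 t 0 + e2 t 1 * e2 t 1 + e2 t 2 * e2 t 2) * hxx + hyy
        - (e1 t 0 * e2 t 0 + e1 t 1 * e2 t 1 + e1 t 2 * e2 t 2) * hxy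
    rw [hB, one_mul, det_fin_four']
    simp only [Matrix.of_apply, Matrix.cons_val', Matrix.cons_val_zero, Matrix.cons_val_one,
      Matrix.head_cons, Matrix.empty_val', Matrix.cons_val_fin_one, Matrix.head_fin_const,
      Matrix.cons_val_two, Matrix.tail_cons, Matrix.cons_val_three]
    rw [hs0, hs1, hs2, hs3]
    ring
  exact ⟨main, by rw [main]; constructor <;> intro h <;> linarith⟩
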